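/- A commutative monoid B satisfies the splitting condition if and only if for any element a ∈ B, any two decompositions of a as finite ordered sums admit a common refinement. Here a decomposition of a is a finite sequence (a_1,…,a_n) with a = a_1 + ⋯ + a_n, and (b_1,…,b_m) refines (a_1,…,a_n) if {1,…,m} can be partitioned into consecutive intervals J_1,…,J_n with a_i = Σ_{j∈J_i} b_j for each i. -/

import Mathlib

/-- The splitting condition on a commutative monoid. -/
def SplitCond (M : Type*) [AddCommMonoid M] : Prop :=
  ∀ x y u v : M, x + y = u + v →
    ∃ z : M, (x + z = u ∧ z + v = y) ∨ (x = u + z ∧ v = z + y)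

/-- The basic identification `(a, 1) ∼ (b, -1)` when `a + b = 0` (true = +1, false = -1). -/
def symRel (M : Type*) [AddCommMonoid M] : M × Bool → M × Bool → Prop :=
  fun p q => p.2 ≠ q.2 ∧ p.1 + q.1 = 0

/-- The symmetrization `s(M)` as the quotient of `M × {±1}` by the generated equivalence. -/
def SymHG (M : Type*) [AddCommMonoid M] := Quot (symRel M)

/-- The hyperlaw on representatives. -/
def hsum {M : Type*} [AddCommMonoid M] : M × Bool → M × Bool → Set (M × Bool)
  | (a, true), (b, true) => {(a + b, true)}
  | (a, false), (b, false) => {(a + b, false)}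
  | (a, true), (b, false) =>
      {r | (∃ z, r = (z, true) ∧ z + b = a) ∨ (∃ z, r = (z, false) ∧ z + a = b)}
  | (a, false), (b, true) =>
      {r | (∃ z, r = (z, true) ∧ z + a = b) ∨ (∃ z, r = (z, false) ∧ z + b = a)}

/-- The induced hypersum on the quotient `s(M)` (union over representatives). -/
def hadd {M : Type*} [AddCommMonoid M] (x y : SymHG M) : Set (SymHG M) :=
  {c | ∃ p q r, Quot.mk (symRel M) p = x ∧ Quot.mk (symRel M) q = y ∧
      Quot.mk (symRel M) r = c ∧ r ∈ hsum p q}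

/-- The neutral element of `s(M)`. -/
def szero (M : Type*) [AddCommMonoid M] : SymHG M := Quot.mk (symRel M) (0, true)

/-- `l'` refines `l`: `l'` can be cut into consecutive blocks whose sums give `l`. -/
def Refines {M : Type*} [AddCommMonoid M] (l' l : List M) : Prop :=
  ∃ P : List (List M), P.flatten = l' ∧ P.map List.sum = l

lemma refines_refl {M : Type*} [AddCommMonoid M] (l : List M) : Refines l l :=
  ⟨l.map (fun a => [a]), by induction l <;> simp_all, by induction l <;> simp_all⟩

lemma split_aux {M : Type*} [AddCommMonoid M] (h : SplitCond M) :
    ∀ n (l₁ l₂ : List M), l₁.length + l₂.length ≤ n → l₁ ≠ [] → l₂ ≠ [] →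
      l₁.sum = l₂.sum → ∃ l₃ : List M, Refines l₃ l₁ ∧ Refines l₃ l₂ := by
  intro n
  induction n with
  | zero => intro l₁ l₂ hn h1 h2 _
            cases l₁ <;> simp_all
  | succ n IH =>
    rintro (_ | ⟨x, xs⟩) (_ | ⟨u, vs⟩) hn h1 h2 hs
    · simp_all
    · simp_all
    · simp_all
    · rcases eq_or_ne xs [] with rfl | hxs
      · refine ⟨u :: vs, ⟨[u :: vs], by simp, ?_⟩, refines_refl _⟩
        simp_all
      rcases eq_or_ne vs [] with rfl | hvs
      · refine ⟨x :: xs, refines_refl _, ⟨[x :: xs], by simp, ?_⟩⟩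
        simp_all
      simp only [List.sum_cons] at hs
      obtain ⟨z, ⟨hz1, hz2⟩ | ⟨hz1, hz2⟩⟩ := h x xs.sum u vs.sum hs
      · obtain ⟨l, ⟨P, hPj, hPs⟩, ⟨Q, hQj, hQs⟩⟩ :=
          IH xs (z :: vs) (by simp at hn ⊢; omega) hxs (by simp)
            (by simp [← hz2])
        cases Q with
        | nil => simp at hQs
        | cons Z Q' =>
          simp only [List.map_cons, List.cons.injEq] at hQs
          refine ⟨x :: l, ⟨[x] :: P, by simp [hPj], by simp [hPs]⟩,
            ⟨(x :: Z) :: Q', ?_, ?_⟩⟩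
          · simp only [List.flatten_cons] at hQj ⊢
            simp [← hQj]
          · simp only [List.map_cons, List.sum_cons, hQs.1, hQs.2, hz1]
      · obtain ⟨l, ⟨P, hPj, hPs⟩, ⟨Q, hQj, hQs⟩⟩ :=
          IH (z :: xs) vs (by simp at hn ⊢; omega) (by simp) hvs
            (by simp [← hz2])
        cases P with
        | nil => simp at hPs
        | cons Z P' =>
          simp only [List.map_cons, List.cons.injEq] at hPs
          refine ⟨u :: l, ⟨(u :: Z) :: P', ?_, ?_⟩,
            ⟨[u] :: Q, by simp [hQj], by simp [hQs]⟩⟩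
          · simp only [List.flatten_cons] at hPj ⊢
            simp [← hPj]
          · simp only [List.map_cons, List.sum_cons, hPs.1, hPs.2, hz1]

theorem splitCond_iff_common_refinement {M : Type*} [AddCommMonoid M] :
    SplitCond M ↔
      ∀ (a : M) (l₁ l₂ : List M), l₁ ≠ [] → l₂ ≠ [] →
        l₁.sum = a → l₂.sum = a →
        ∃ l₃ : List M, Refines l₃ l₁ ∧ Refines l₃ l₂ := by
  constructor
  · intro h a l₁ l₂ h1 h2 hs1 hs2
    exact split_aux h (l₁.length + l₂.length) l₁ l₂ le_rfl h1 h2 (hs1.trans hs2.symm)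
  · intro H x y u v hxy
    obtain ⟨l₃, ⟨P, hPj, hPs⟩, ⟨Q, hQj, hQs⟩⟩ :=
      H (x + y) [x, y] [u, v] (by simp) (by simp) (by simp) (by simp [← hxy])
    match P, hPs with
    | [A, B], hPs =>
    match Q, hQs with
    | [C, D], hQs =>
      simp only [List.map_cons, List.map_nil, List.cons.injEq, and_true] at hPs hQs
      have hAB : A ++ B = C ++ D := by
        have := hPj.trans hQj.symm
        simpa using this
      rcases List.append_eq_append_iff.mp hAB with ⟨a', h1, h2⟩ | ⟨c', h1, h2⟩
      · exact ⟨a'.sum, Or.inl ⟨by rw [← hQs.1, h1]; simp [hPs.1], by rw [← hPs.2, h2]; simp [hQs.2]⟩⟩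
      · exact ⟨c'.sum, Or.inr ⟨by rw [← hPs.1, h1]; simp [hQs.1], by rw [← hQs.2, h2]; simp [hPs.2]⟩⟩
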